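/- Let n ≥ 0 be an integer, 𝔞₁,…,𝔞_{n+1} ∈ (0,1] real numbers, and r ≥ 2 an integer. Suppose 0 < ρ ≤ 1 and (d_k)_{k≥0} is a sequence of complex numbers such that the power series h(w) = ∑_{k≥0} d_k w^k converges for |w| < ρ, and such that the function F(z) := h(z^{1/r}) satisfies (L F)(z) = z^{1/r} for all z ∈ (0, ρ^r) and d₀ = 0. Then F(z) = W_r(z) for all z ∈ (0, ρ^r), where W_r(z) := ∑_{k≥0} (∏_{j=1}^{n+1} [𝔞_j + 1/r]_k / [1/r]_{k+1}) · z^{k+1/r}. In other words, W_r is the unique solution of L(·) = z^{1/r}, analytic in z^{1/r} near 0, which vanishes at 0. -/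

import Mathlib

open scoped BigOperators

/-- The Euler operator `D = z · d/dz` acting on complex-valued functions of a real variable. -/
noncomputable def DopC (f : ℝ → ℂ) : ℝ → ℂ := fun z => (z : ℂ) * deriv f z

/-- The hypergeometric differential operator
`L = D^{n+1} − z·∏_{j=1}^{n+1}(D + 𝔞_j)` attached to indices `(𝔞₁,…,𝔞_{n+1}; 1,…,1)`,
acting on complex-valued functions of a real variable. -/
noncomputable def hgLC (n : ℕ) (a : Fin (n + 1) → ℝ) (f : ℝ → ℂ) : ℝ → ℂ := fun z =>
  (DopC^[n + 1] f) z -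
    (z : ℂ) * ((List.ofFn fun j : Fin (n + 1) =>
      (fun g : ℝ → ℂ => fun w => DopC g w + (a j : ℂ) * g w)).foldr (· ∘ ·) id f z)

/-- `W_r(z) = ∑_{k≥0} (∏_{j=1}^{n+1} [𝔞_j + 1/r]_k / [1/r]_{k+1}) · z^{k+1/r}`. -/
noncomputable def Wr (n : ℕ) (a : Fin (n + 1) → ℝ) (r : ℕ) (z : ℝ) : ℝ :=
  ∑' k : ℕ,
    (∏ j : Fin (n + 1),
      (ascPochhammer ℝ k).eval (a j + 1 / (r : ℝ)) /
        (ascPochhammer ℝ (k + 1)).eval (1 / (r : ℝ))) *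
      z ^ ((k : ℝ) + 1 / (r : ℝ))

open scoped Topology
open Filter Set


/-- Sum of a power series with given coefficients, at a real point (as a complex number). -/
noncomputable def SsumC (u : ℕ → ℂ) (x : ℝ) : ℂ := ∑' k, u k * (x : ℂ) ^ k

/-- `u` has radius of convergence at least `ρ`, in a strong (absolute) sense. -/
def GoodC (ρ : ℝ) (u : ℕ → ℂ) : Prop :=
  ∀ t : ℝ, 0 ≤ t → t < ρ → Summable fun k => ‖u k‖ * t ^ k

lemma goodC_of_le {ρ : ℝ} {u v : ℕ → ℂ} (hle : ∀ k, ‖v k‖ ≤ ‖u k‖) (h : GoodC ρ u) :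
    GoodC ρ v := fun t ht htρ =>
  (h t ht htρ).of_nonneg_of_le (fun k => by positivity)
    (fun k => mul_le_mul_of_nonneg_right (hle k) (pow_nonneg ht k))

lemma goodC_bound {ρ : ℝ} {u : ℕ → ℂ} (h : GoodC ρ u) {t : ℝ} (ht : 0 ≤ t) (htρ : t < ρ) :
    ∃ C : ℝ, 0 ≤ C ∧ ∀ k, ‖u k‖ * t ^ k ≤ C := by
  have hs := h t ht htρ
  obtain ⟨C, hC⟩ := hs.tendsto_atTop_zero.bddAbove_range
  refine ⟨C, le_trans (by positivity) (hC ⟨0, rfl⟩), fun k => hC ⟨k, rfl⟩⟩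

lemma goodC_of_summable {ρ : ℝ} (hρ : 0 < ρ) {d : ℕ → ℂ}
    (h : ∀ w : ℂ, ‖w‖ < ρ → Summable fun k : ℕ => d k * w ^ k) : GoodC ρ d := by
  intro t ht htρ
  obtain ⟨t', htt', ht'ρ⟩ : ∃ t', t < t' ∧ t' < ρ := ⟨(t + ρ) / 2, by linarith, by linarith⟩
  have ht'0 : 0 < t' := lt_of_le_of_lt ht htt'
  have hs : Summable fun k : ℕ => d k * ((t' : ℂ)) ^ k := by
    apply h
    rw [Complex.norm_real, Real.norm_eq_abs, abs_of_pos ht'0]; exact ht'ρ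
  obtain ⟨C, hC⟩ := hs.tendsto_atTop_zero.norm.bddAbove_range
  have hCk : ∀ k, ‖d k‖ * t' ^ k ≤ C := by
    intro k
    have := hC ⟨k, rfl⟩
    simpa [norm_mul, norm_pow, Complex.norm_real, Real.norm_eq_abs, abs_of_pos ht'0] using this
  have hgeo : Summable fun k : ℕ => C * (t / t') ^ k :=
    (summable_geometric_of_lt_one (div_nonneg ht ht'0.le)
      (by rw [div_lt_one ht'0]; exact htt')).mul_left C
  refine hgeo.of_nonneg_of_le (fun k => by positivity) (fun k => ?_)
  have : ‖d k‖ * t ^ k = (‖d k‖ * t' ^ k) * (t / t') ^ k := by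
    have h0 : (t' : ℝ) ^ k ≠ 0 := by positivity
    have ht'ne : t' ≠ 0 := ht'0.ne'
    rw [div_pow]
    field_simp
  rw [this]
  exact mul_le_mul_of_nonneg_right (hCk k) (by positivity)

lemma goodC_succ_mul {ρ : ℝ} {u : ℕ → ℂ} (h : GoodC ρ u) :
    GoodC ρ fun k => ((k : ℂ) + 1) * u k := by
  intro t ht htρ
  obtain ⟨t', htt', ht'ρ⟩ : ∃ t', t < t' ∧ t' < ρ := ⟨(t + ρ) / 2, by linarith, by linarith⟩
  have ht'0 : 0 < t' := lt_of_le_of_lt ht htt'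
  obtain ⟨C, hC0, hCk⟩ := goodC_bound h (le_trans ht htt'.le) ht'ρ
  have hx : ‖t / t'‖ < 1 := by
    rw [Real.norm_eq_abs, abs_of_nonneg (div_nonneg ht ht'0.le), div_lt_one ht'0]; exact htt'
  have hgeo : Summable fun k : ℕ => ((k : ℝ) + 1) * (t / t') ^ k := by
    have h1 : Summable fun k : ℕ => (k : ℝ) * (t / t') ^ k := by
      simpa using summable_pow_mul_geometric_of_norm_lt_one 1 hx
    have h2 : Summable fun k : ℕ => (t / t') ^ k :=
      summable_geometric_of_lt_one (div_nonneg ht ht'0.le)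
        (by rwa [Real.norm_eq_abs, abs_of_nonneg (div_nonneg ht ht'0.le)] at hx)
    simpa [add_mul] using h1.add h2
  refine (hgeo.mul_left C).of_nonneg_of_le (fun k => by positivity) (fun k => ?_)
  have hnorm : ‖((k : ℂ) + 1) * u k‖ = ((k : ℝ) + 1) * ‖u k‖ := by
    rw [norm_mul]
    congr 1
    have : ((k : ℂ) + 1) = ((k + 1 : ℕ) : ℂ) := by push_cast; ring
    rw [this, Complex.norm_natCast]; push_cast; ring
  rw [hnorm]
  have : ((k : ℝ) + 1) * ‖u k‖ * t ^ k = ((k : ℝ) + 1) * (t / t') ^ k * (‖u k‖ * t' ^ k) := by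
    rw [div_pow]
    field_simp
  rw [this]
  calc ((k : ℝ) + 1) * (t / t') ^ k * (‖u k‖ * t' ^ k)
      ≤ ((k : ℝ) + 1) * (t / t') ^ k * C :=
        mul_le_mul_of_nonneg_left (hCk k) (by positivity)
    _ = C * (((k : ℝ) + 1) * (t / t') ^ k) := by ring

lemma goodC_const_mul {ρ : ℝ} {u : ℕ → ℂ} (c : ℂ) (h : GoodC ρ u) :
    GoodC ρ fun k => c * u k := by
  intro t ht htρ
  have := (h t ht htρ).mul_left ‖c‖
  refine this.congr fun k => ?_
  simp [norm_mul, mul_assoc]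

lemma goodC_mul_linear {ρ : ℝ} {u : ℕ → ℂ} {v : ℕ → ℂ} {C : ℝ}
    (hv : ∀ k, ‖v k‖ ≤ C * ((k : ℝ) + 1)) (h : GoodC ρ u) :
    GoodC ρ fun k => v k * u k := by
  have hC : 0 ≤ C := by
    have := (norm_nonneg (v 0)).trans (hv 0)
    simpa using this
  refine goodC_of_le (u := fun k => (C : ℂ) * (((k : ℂ) + 1) * u k)) (fun k => ?_)
    (goodC_const_mul _ (goodC_succ_mul h))
  rw [norm_mul, norm_mul, norm_mul]
  have h1 : ‖((k : ℂ) + 1)‖ = ((k : ℝ) + 1) := by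
    have : ((k : ℂ) + 1) = ((k + 1 : ℕ) : ℂ) := by push_cast; ring
    rw [this, Complex.norm_natCast]; push_cast; ring
  have h2 : ‖(C : ℂ)‖ = C := by rw [Complex.norm_real, Real.norm_of_nonneg hC]
  rw [h1, h2, ← mul_assoc]
  exact mul_le_mul_of_nonneg_right (hv k) (norm_nonneg _)

lemma goodC_summable {ρ : ℝ} {u : ℕ → ℂ} (h : GoodC ρ u) {x : ℝ} (hx : 0 ≤ x) (hxρ : x < ρ) :
    Summable fun k => u k * (x : ℂ) ^ k := by
  refine Summable.of_norm ?_
  refine (h x hx hxρ).congr fun k => ?_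
  simp [norm_mul, norm_pow, Complex.norm_real, abs_of_nonneg hx]

lemma goodC_sub {ρ : ℝ} {u v : ℕ → ℂ} (hu : GoodC ρ u) (hv : GoodC ρ v) :
    GoodC ρ fun k => u k - v k := by
  intro t ht htρ
  refine ((hu t ht htρ).add (hv t ht htρ)).of_nonneg_of_le (fun k => by positivity) fun k => ?_
  calc ‖u k - v k‖ * t ^ k ≤ (‖u k‖ + ‖v k‖) * t ^ k :=
        mul_le_mul_of_nonneg_right (norm_sub_le _ _) (pow_nonneg ht k)
    _ = ‖u k‖ * t ^ k + ‖v k‖ * t ^ k := by ring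

lemma goodC_shiftr {ρ : ℝ} (r : ℕ) {u : ℕ → ℂ} (h : GoodC ρ u) :
    GoodC ρ fun k => if r ≤ k then u (k - r) else 0 := by
  intro t ht htρ
  rw [← summable_nat_add_iff r]
  refine ((h t ht htρ).mul_right (t ^ r)).congr fun k => ?_
  simp [Nat.add_sub_cancel, pow_add, mul_assoc]

lemma goodC_shiftl {ρ : ℝ} (m : ℕ) {u : ℕ → ℂ} (h : GoodC ρ u) :
    GoodC ρ fun j => u (j + m) := by
  intro t ht htρ
  rcases eq_or_lt_of_le ht with h0 | ht0
  · apply summable_of_ne_finset_zero (s := {0})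
    intro j hj
    simp only [Finset.mem_singleton] at hj
    rw [← h0, zero_pow hj, mul_zero]
  · have h2 : Summable fun j => ‖u (j + m)‖ * t ^ (j + m) :=
      (summable_nat_add_iff m).2 (h t ht htρ)
    refine (h2.div_const (t ^ m)).congr fun j => ?_
    have h0 : (t : ℝ) ^ m ≠ 0 := by positivity
    rw [pow_add]
    field_simp

lemma goodC_delta {ρ : ℝ} : GoodC ρ fun k => if k = 1 then (1 : ℂ) else 0 := by
  intro t ht htρ
  apply summable_of_ne_finset_zero (s := {1})
  intro j hj
  simp only [Finset.mem_singleton] at hj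
  simp [hj]

lemma hasDerivAt_SsumC {ρ : ℝ} {u : ℕ → ℂ} (hu : GoodC ρ u) {x : ℝ}
    (hx : 0 < x) (hxρ : x < ρ) :
    HasDerivAt (SsumC u) (∑' k : ℕ, u k * ((k : ℂ) * (x : ℂ) ^ (k - 1))) x := by
  obtain ⟨t', hxt', ht'ρ⟩ : ∃ t', x < t' ∧ t' < ρ := ⟨(x + ρ) / 2, by linarith, by linarith⟩
  have ht'0 : 0 < t' := hx.trans hxt'
  -- summability of the bound
  have hM : Summable fun k : ℕ => ‖(k : ℂ) * u k‖ * t' ^ k / t' := by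
    have := goodC_mul_linear (v := fun k => (k : ℂ)) (C := 1)
      (fun k => by rw [Complex.norm_natCast]; push_cast; linarith) hu
    exact (this t' ht'0.le ht'ρ).div_const t'
  have hMeq : ∀ k : ℕ, ‖u k‖ * ((k : ℝ) * t' ^ (k - 1)) = ‖(k : ℂ) * u k‖ * t' ^ k / t' := by
    intro k
    cases k with
    | zero => simp
    | succ k =>
      rw [norm_mul, Complex.norm_natCast, Nat.add_sub_cancel, pow_succ]
      field_simp
  set s : Set ℝ := Set.Ioo 0 t' with hs
  have hopen : IsOpen s := isOpen_Ioo
  have hmem : x ∈ s := ⟨hx, hxt'⟩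
  have hbound : ∀ (k : ℕ) (y : ℝ), y ∈ s → ‖u k * ((k : ℂ) * (y : ℂ) ^ (k - 1))‖ ≤
      ‖(k : ℂ) * u k‖ * t' ^ k / t' := by
    intro k y hy
    rw [← hMeq k]
    rw [norm_mul, norm_mul, Complex.norm_natCast, norm_pow, Complex.norm_real,
      Real.norm_of_nonneg hy.1.le]
    have h1 : y ^ (k - 1) ≤ t' ^ (k - 1) := pow_le_pow_left₀ hy.1.le hy.2.le _
    exact mul_le_mul_of_nonneg_left
      (mul_le_mul_of_nonneg_left h1 (Nat.cast_nonneg k)) (norm_nonneg _)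
  have hunif : TendstoUniformlyOn
      (fun N : ℕ => fun y : ℝ => ∑ k ∈ Finset.range N, u k * ((k : ℂ) * (y : ℂ) ^ (k - 1)))
      (fun y : ℝ => ∑' k : ℕ, u k * ((k : ℂ) * (y : ℂ) ^ (k - 1))) Filter.atTop s :=
    tendstoUniformlyOn_tsum_nat hM hbound
  have hderiv : ∀ (N : ℕ) (y : ℝ), y ∈ s →
      HasDerivAt (fun y : ℝ => ∑ k ∈ Finset.range N, u k * (y : ℂ) ^ k)
        (∑ k ∈ Finset.range N, u k * ((k : ℂ) * (y : ℂ) ^ (k - 1))) y := by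
    intro N y _
    apply HasDerivAt.fun_sum
    intro k _
    exact ((hasDerivAt_pow k ((y : ℝ) : ℂ)).comp_ofReal).const_mul (u k)
  have hlim : ∀ y : ℝ, y ∈ s → Filter.Tendsto
      (fun N : ℕ => ∑ k ∈ Finset.range N, u k * (y : ℂ) ^ k) Filter.atTop (𝓝 (SsumC u y)) := by
    intro y hy
    exact (goodC_summable hu hy.1.le (hy.2.trans ht'ρ)).hasSum.tendsto_sum_nat
  exact hasDerivAt_of_tendstoUniformlyOn hopen hunif
    (Filter.Eventually.of_forall hderiv) hlim hmem

lemma SsumC_mul_shift {ρ : ℝ} {v : ℕ → ℂ} (hv : GoodC ρ v) (h0 : v 0 = 0) {x : ℝ}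
    (hx : 0 ≤ x) (hxρ : x < ρ) :
    SsumC v x = (x : ℂ) * ∑' k : ℕ, v (k + 1) * (x : ℂ) ^ k := by
  have hsum := goodC_summable hv hx hxρ
  rw [SsumC, hsum.tsum_eq_zero_add, h0, zero_mul, zero_add, ← tsum_mul_left]
  congr 1
  funext k
  rw [pow_succ]
  ring


section rpowfacts

variable {ρ : ℝ} {r : ℕ}

lemma rpow_mem_Ioo (hρ : 0 < ρ) (hr : 1 ≤ r) {z : ℝ} (hz : z ∈ Set.Ioo 0 (ρ ^ r)) :
    z ^ (1 / (r : ℝ)) ∈ Set.Ioo 0 ρ := by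
  have hr0 : (0:ℝ) < (r:ℝ) := by exact_mod_cast Nat.lt_of_lt_of_le Nat.zero_lt_one hr
  constructor
  · exact Real.rpow_pos_of_pos hz.1 _
  · have h1 : z ^ (1 / (r : ℝ)) < (ρ ^ r) ^ (1 / (r : ℝ)) :=
      Real.rpow_lt_rpow hz.1.le hz.2 (by positivity)
    have h2 : (ρ ^ r) ^ (1 / (r : ℝ)) = ρ := by
      rw [← Real.rpow_natCast ρ r, ← Real.rpow_mul hρ.le, mul_one_div,
        div_self hr0.ne', Real.rpow_one]
    rwa [h2] at h1

lemma pow_rpow_inv (hr : 1 ≤ r) {w : ℝ} (hw : 0 ≤ w) :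
    (w ^ r) ^ (1 / (r : ℝ)) = w := by
  have hr0 : (0:ℝ) < (r:ℝ) := by exact_mod_cast Nat.lt_of_lt_of_le Nat.zero_lt_one hr
  rw [← Real.rpow_natCast w r, ← Real.rpow_mul hw, mul_one_div, div_self hr0.ne',
    Real.rpow_one]

end rpowfacts

lemma DopC_ssum {ρ : ℝ} {r : ℕ} (hρ : 0 < ρ) (hr : 1 ≤ r) {u : ℕ → ℂ} (hu : GoodC ρ u)
    {g : ℝ → ℂ} (hg : Set.EqOn g (fun z => SsumC u (z ^ (1 / (r : ℝ)))) (Set.Ioo 0 (ρ ^ r))) :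
    Set.EqOn (DopC g) (fun z => SsumC (fun k => ((k : ℂ) / (r : ℂ)) * u k) (z ^ (1 / (r : ℝ))))
      (Set.Ioo 0 (ρ ^ r)) := by
  intro z hz
  have hr0 : (0:ℝ) < (r:ℝ) := by exact_mod_cast Nat.lt_of_lt_of_le Nat.zero_lt_one hr
  have hrC : ((r : ℂ)) ≠ 0 := by exact_mod_cast hr0.ne'
  set w : ℝ := z ^ (1 / (r : ℝ)) with hwdef
  obtain ⟨hw0, hwρ⟩ := rpow_mem_Ioo hρ hr hz
  -- derivative of inner sum
  have hS := hasDerivAt_SsumC hu hw0 hwρ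
  set S' : ℂ := ∑' k : ℕ, u k * ((k : ℂ) * (w : ℂ) ^ (k - 1)) with hS'def
  have hw' : HasDerivAt (fun z : ℝ => z ^ (1 / (r : ℝ))) ((1 / (r : ℝ)) * z ^ (1 / (r : ℝ) - 1)) z :=
    Real.hasDerivAt_rpow_const (Or.inl hz.1.ne')
  have hcomp : HasDerivAt (fun z : ℝ => SsumC u (z ^ (1 / (r : ℝ))))
      (((1 / (r : ℝ)) * z ^ (1 / (r : ℝ) - 1)) • S') z := by
    have h := HasDerivAt.scomp (h := fun z : ℝ => z ^ (1 / (r : ℝ))) z hS hw'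
    exact h
  have hev : g =ᶠ[𝓝 z] fun z => SsumC u (z ^ (1 / (r : ℝ))) :=
    Filter.eventuallyEq_of_mem (isOpen_Ioo.mem_nhds hz) hg
  have hderiv : deriv g z = (((1 / (r : ℝ)) * z ^ (1 / (r : ℝ) - 1)) : ℝ) • S' := by
    rw [hev.deriv_eq]
    exact hcomp.deriv
  -- now compute
  have hzw : z * ((1 / (r : ℝ)) * z ^ (1 / (r : ℝ) - 1)) = (1 / (r : ℝ)) * w := by
    rw [hwdef]
    rw [show z * ((1 / (r : ℝ)) * z ^ (1 / (r : ℝ) - 1)) =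
      (1 / (r : ℝ)) * (z ^ (1:ℝ) * z ^ (1 / (r : ℝ) - 1)) by rw [Real.rpow_one]; ring,
      ← Real.rpow_add hz.1]
    norm_num
  have hDg : DopC g z = (((1 / (r : ℝ)) * w : ℝ) : ℂ) * S' := by
    rw [DopC, hderiv]
    rw [Complex.real_smul, ← mul_assoc, ← Complex.ofReal_mul, hzw]
  -- (w:ℂ) * S' = ∑' k, ((k:ℂ) * u k) * w ^ k
  have hwS : (w : ℂ) * S' = ∑' k : ℕ, ((k : ℂ) * u k) * (w : ℂ) ^ k := by
    rw [hS'def, ← tsum_mul_left]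
    congr 1
    funext k
    cases k with
    | zero => simp
    | succ k =>
      rw [Nat.add_sub_cancel, pow_succ]
      ring
  have : DopC g z = (1 / (r : ℂ)) * ((w : ℂ) * S') := by
    rw [hDg, Complex.ofReal_mul, mul_assoc]
    norm_num
  rw [this, hwS, ← tsum_mul_left]
  simp only [SsumC]
  congr 1
  funext k
  ring


lemma goodC_kdiv {ρ : ℝ} {r : ℕ} (hr : 1 ≤ r) {u : ℕ → ℂ} (hu : GoodC ρ u) :
    GoodC ρ fun k => ((k : ℂ) / (r : ℂ)) * u k := by
  have hr1 : (1:ℝ) ≤ (r:ℝ) := by exact_mod_cast hr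
  refine goodC_mul_linear (C := 1) (fun k => ?_) hu
  rw [norm_div, Complex.norm_natCast, Complex.norm_natCast]
  have : (k : ℝ) / (r : ℝ) ≤ (k : ℝ) := div_le_self (Nat.cast_nonneg k) hr1
  linarith

lemma DopC_iter {ρ : ℝ} {r : ℕ} (hρ : 0 < ρ) (hr : 1 ≤ r) {u : ℕ → ℂ} (hu : GoodC ρ u)
    {g : ℝ → ℂ} (hg : Set.EqOn g (fun z => SsumC u (z ^ (1 / (r : ℝ)))) (Set.Ioo 0 (ρ ^ r)))
    (m : ℕ) :
    GoodC ρ (fun k => ((k : ℂ) / (r : ℂ)) ^ m * u k) ∧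
    Set.EqOn (DopC^[m] g)
      (fun z => SsumC (fun k => ((k : ℂ) / (r : ℂ)) ^ m * u k) (z ^ (1 / (r : ℝ))))
      (Set.Ioo 0 (ρ ^ r)) := by
  induction m with
  | zero =>
    simp only [pow_zero, one_mul, Function.iterate_zero, id]
    exact ⟨hu, hg⟩
  | succ m ih =>
    obtain ⟨ihg, ihe⟩ := ih
    constructor
    · have := goodC_kdiv hr ihg
      refine goodC_of_le (fun k => le_of_eq ?_) this
      rw [pow_succ]
      ring_nf
    · rw [Function.iterate_succ']
      have := DopC_ssum hρ hr ihg ihe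
      intro z hz
      have h2 := this hz
      simp only [Function.comp_apply] at h2 ⊢
      rw [h2]
      congr 1
      funext k
      rw [pow_succ]
      ring

/-- Coefficients after applying the product of first-order operators indexed by `l`. -/
noncomputable def lcoef (r : ℕ) (l : List ℝ) (u : ℕ → ℂ) : ℕ → ℂ :=
  fun k => (l.map (fun b : ℝ => ((k : ℂ) / (r : ℂ)) + (b : ℂ))).prod * u k

lemma fold_ssum {ρ : ℝ} {r : ℕ} (hρ : 0 < ρ) (hr : 1 ≤ r) (l : List ℝ) {u : ℕ → ℂ}
    (hu : GoodC ρ u)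
    {g : ℝ → ℂ} (hg : Set.EqOn g (fun z => SsumC u (z ^ (1 / (r : ℝ)))) (Set.Ioo 0 (ρ ^ r))) :
    GoodC ρ (lcoef r l u) ∧
    Set.EqOn
      ((l.map fun b => (fun g : ℝ → ℂ => fun w => DopC g w + ((b:ℝ) : ℂ) * g w)).foldr
        (· ∘ ·) id g)
      (fun z => SsumC (lcoef r l u) (z ^ (1 / (r : ℝ))))
      (Set.Ioo 0 (ρ ^ r)) := by
  induction l with
  | nil =>
    constructor
    · exact goodC_of_le (fun k => le_of_eq (by simp [lcoef])) hu
    · intro z hz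
      have := hg hz
      simpa [lcoef, SsumC] using this
  | cons b l ih =>
    obtain ⟨ihg, ihe⟩ := ih
    have hr1 : (1:ℝ) ≤ (r:ℝ) := by exact_mod_cast hr
    have hcoef : ∀ k, lcoef r (b :: l) u k =
        (((k : ℂ) / (r : ℂ)) + (b : ℂ)) * lcoef r l u k := by
      intro k
      simp only [lcoef, List.map_cons, List.prod_cons, mul_assoc]
    have hgood : GoodC ρ (lcoef r (b :: l) u) := by
      have h2 : GoodC ρ fun k => (((k : ℂ) / (r : ℂ)) + (b : ℂ)) * lcoef r l u k := by
        refine goodC_mul_linear (C := 1 + |b|) (fun k => ?_) ihg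
        calc ‖((k : ℂ) / (r : ℂ)) + (b : ℂ)‖ ≤ ‖((k : ℂ) / (r : ℂ))‖ + ‖(b : ℂ)‖ :=
              norm_add_le _ _
          _ ≤ (k : ℝ) + |b| := by
              rw [norm_div, Complex.norm_natCast, Complex.norm_natCast, Complex.norm_real,
                Real.norm_eq_abs]
              have : (k : ℝ) / (r : ℝ) ≤ (k : ℝ) := div_le_self (Nat.cast_nonneg k) hr1
              linarith
          _ ≤ (1 + |b|) * ((k : ℝ) + 1) := by nlinarith [abs_nonneg b, Nat.cast_nonneg (α := ℝ) k]
      refine goodC_of_le (fun k => le_of_eq ?_) h2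
      rw [hcoef]
    refine ⟨hgood, ?_⟩
    intro z hz
    simp only [List.map_cons, List.foldr_cons, Function.comp_apply]
    have hD := DopC_ssum hρ hr ihg ihe hz
    have hEval := ihe hz
    simp only at hD hEval ⊢
    rw [hD, hEval]
    obtain ⟨hw0, hwρ⟩ := rpow_mem_Ioo hρ hr hz
    have h1 := goodC_summable (goodC_kdiv hr ihg) hw0.le hwρ
    have h2 := goodC_summable ihg hw0.le hwρ
    simp only [SsumC]
    rw [← tsum_mul_left, ← h1.tsum_add (h2.mul_left ((b:ℝ):ℂ))]
    congr 1
    funext k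
    rw [hcoef]
    ring

lemma ssumC_zero_of_goodC {ρ : ℝ} (hρ : 0 < ρ) {A : ℕ → ℂ} (hA : GoodC ρ A)
    (h0 : ∀ x ∈ Set.Ioo (0:ℝ) ρ, SsumC A x = 0) : ∀ k, A k = 0 := by
  intro k
  induction k using Nat.strong_induction_on with
  | _ k IH =>
  set B : ℕ → ℂ := fun j => A (j + k) with hB
  have hBg : GoodC ρ B := goodC_shiftl k hA
  have hB0 : ∀ x ∈ Set.Ioo (0:ℝ) ρ, SsumC B x = 0 := by
    intro x hx
    have hsum := goodC_summable hA hx.1.le hx.2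
    have hsplit := hsum.sum_add_tsum_nat_add k
    have hzero : ∑ j ∈ Finset.range k, A j * (x : ℂ) ^ j = 0 :=
      Finset.sum_eq_zero fun j hj => by rw [IH j (Finset.mem_range.mp hj), zero_mul]
    have heq : (∑' j : ℕ, A (j + k) * (x : ℂ) ^ (j + k)) = 0 := by
      have := h0 x hx
      rw [SsumC] at this
      rw [← hsplit, hzero, zero_add] at this
      exact this
    have heq2 : (x : ℂ) ^ k * SsumC B x = 0 := by
      rw [SsumC, ← tsum_mul_left]
      rw [← heq]
      congr 1
      funext j
      rw [pow_add]
      ring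
    have hxne : ((x : ℂ)) ^ k ≠ 0 := pow_ne_zero _ (by exact_mod_cast hx.1.ne')
    exact (mul_eq_zero.mp heq2).resolve_left hxne
  -- continuity at 0
  set t' : ℝ := ρ / 2 with ht'
  have ht'0 : 0 < t' := by simp only [ht']; positivity
  have ht'ρ : t' < ρ := by simp only [ht']; linarith
  have hcont : ContinuousOn (SsumC B) (Set.Icc 0 t') := by
    apply continuousOn_tsum (f := fun k (y : ℝ) => B k * (y : ℂ) ^ k)
      (u := fun k => ‖B k‖ * t' ^ k)
    · intro i
      exact (continuous_const.mul (Complex.continuous_ofReal.pow i)).continuousOn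
    · exact hBg t' ht'0.le ht'ρ
    · intro j y hy
      rw [norm_mul, norm_pow, Complex.norm_real, Real.norm_of_nonneg hy.1]
      exact mul_le_mul_of_nonneg_left
        (pow_le_pow_left₀ hy.1 hy.2 j) (norm_nonneg _)
  have hmem0 : (0:ℝ) ∈ Set.Icc (0:ℝ) t' := ⟨le_refl _, ht'0.le⟩
  have htendsto : Filter.Tendsto (SsumC B) (𝓝[Set.Icc (0:ℝ) t'] 0) (𝓝 (SsumC B 0)) :=
    hcont.continuousWithinAt hmem0
  have htendsto2 : Filter.Tendsto (SsumC B) (𝓝[Set.Ioo (0:ℝ) t'] 0) (𝓝 (SsumC B 0)) :=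
    htendsto.mono_left (nhdsWithin_mono 0 Set.Ioo_subset_Icc_self)
  have hne : (𝓝[Set.Ioo (0:ℝ) t'] (0:ℝ)).NeBot := by
    rw [← mem_closure_iff_nhdsWithin_neBot, closure_Ioo ht'0.ne]
    exact ⟨le_refl _, ht'0.le⟩
  have hzero2 : Filter.Tendsto (SsumC B) (𝓝[Set.Ioo (0:ℝ) t'] 0) (𝓝 0) := by
    apply Filter.Tendsto.congr' _ tendsto_const_nhds
    filter_upwards [self_mem_nhdsWithin] with x hx
    exact (hB0 x ⟨hx.1, hx.2.trans ht'ρ⟩).symm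
  have hB00 : SsumC B 0 = 0 := tendsto_nhds_unique htendsto2 hzero2
  have : SsumC B 0 = B 0 := by
    rw [SsumC]
    rw [tsum_eq_single 0 (fun j hj => by
      rw [Complex.ofReal_zero, zero_pow hj, mul_zero])]
    simp
  rw [this] at hB00
  simpa [hB] using hB00

lemma ssumC_pow_shift {ρ : ℝ} {v : ℕ → ℂ} (hv : GoodC ρ v) (r : ℕ) {x : ℝ}
    (hx0 : 0 ≤ x) (hxρ : x < ρ) :
    (x : ℂ) ^ r * SsumC v x = SsumC (fun k => if r ≤ k then v (k - r) else 0) x := by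
  set f : ℕ → ℂ := fun k => (if r ≤ k then v (k - r) else 0) * (x : ℂ) ^ k with hf
  have hinj : Function.Injective (fun m : ℕ => m + r) := fun a b h => by simpa using h
  have hvan : ∀ k ∉ Set.range (fun m : ℕ => m + r), f k = 0 := by
    intro k hk
    have hkr : k < r := by
      by_contra hge
      exact hk ⟨k - r, show k - r + r = k from Nat.sub_add_cancel (by omega)⟩
    simp [hf, Nat.not_le.mpr hkr]
  have hcomp : (fun m : ℕ => f (m + r)) = fun m => (v m * (x : ℂ) ^ m) * (x : ℂ) ^ r := by
    funext m
    simp only [hf, Nat.le_add_left, if_pos, Nat.add_sub_cancel]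
    rw [pow_add]
    ring
  have hsum := (goodC_summable hv hx0 hxρ).hasSum.mul_right ((x : ℂ) ^ r)
  rw [← hcomp] at hsum
  have hfs : HasSum f (SsumC v x * (x : ℂ) ^ r) := (hinj.hasSum_iff hvan).mp hsum
  have h2 : SsumC (fun k => if r ≤ k then v (k - r) else 0) x = SsumC v x * (x : ℂ) ^ r :=
    hfs.tsum_eq
  rw [h2]
  ring

lemma ssumC_delta (x : ℝ) :
    SsumC (fun k => if k = 1 then (1 : ℂ) else 0) x = (x : ℂ) := by
  rw [SsumC, tsum_eq_single 1 (fun j hj => by simp [hj])]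
  simp

lemma ssumC_sub {u v : ℕ → ℂ} {x : ℝ} (hu : Summable fun k => u k * (x:ℂ) ^ k)
    (hv : Summable fun k => v k * (x:ℂ) ^ k) :
    SsumC (fun k => u k - v k) x = SsumC u x - SsumC v x := by
  rw [SsumC, SsumC, SsumC, ← hu.tsum_sub hv]
  congr 1
  funext k
  ring

/-- The coefficient of `W_r`. -/
noncomputable def PrealW (n : ℕ) (a : Fin (n + 1) → ℝ) (r : ℕ) (m : ℕ) : ℝ :=
  ∏ j : Fin (n + 1),
    (ascPochhammer ℝ m).eval (a j + 1 / (r : ℝ)) /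
      (ascPochhammer ℝ (m + 1)).eval (1 / (r : ℝ))

lemma prealW_step (n : ℕ) (a : Fin (n + 1) → ℝ) (r : ℕ) (hr : 1 ≤ r) (m : ℕ) :
    (((m : ℝ) + 1) + 1 / (r : ℝ)) ^ (n + 1) * PrealW n a r (m + 1) =
      (∏ j : Fin (n + 1), ((m : ℝ) + 1 / (r : ℝ) + a j)) * PrealW n a r m := by
  have hr0 : (0:ℝ) < (r:ℝ) := by exact_mod_cast Nat.lt_of_lt_of_le Nat.zero_lt_one hr
  set t : ℝ := 1 / (r : ℝ) with htdef
  have ht : 0 < t := by positivity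
  have hD : (ascPochhammer ℝ (m + 1)).eval t ≠ 0 := (ascPochhammer_pos _ _ ht).ne'
  have hT : t + ((m : ℝ) + 1) ≠ 0 := by positivity
  have hfac : ∀ j : Fin (n + 1),
      (ascPochhammer ℝ (m + 1)).eval (a j + t) / (ascPochhammer ℝ (m + 2)).eval t =
        ((ascPochhammer ℝ m).eval (a j + t) / (ascPochhammer ℝ (m + 1)).eval t) *
          ((a j + t + m) / (t + ((m : ℝ) + 1))) := by
    intro j
    rw [ascPochhammer_succ_eval, show m + 2 = (m + 1) + 1 from rfl, ascPochhammer_succ_eval]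
    push_cast
    field_simp
  have h1 : PrealW n a r (m + 1) =
      PrealW n a r m * (∏ j : Fin (n + 1), (a j + t + m)) / (t + ((m : ℝ) + 1)) ^ (n + 1) := by
    rw [PrealW, Finset.prod_congr rfl (fun j _ => hfac j), Finset.prod_mul_distrib]
    rw [show (∏ j : Fin (n + 1), ((a j + t + (m:ℝ)) / (t + ((m : ℝ) + 1)))) =
      (∏ j : Fin (n + 1), (a j + t + (m:ℝ))) / (t + ((m : ℝ) + 1)) ^ (n + 1) by
        rw [Finset.prod_div_distrib, Finset.prod_const, Finset.card_univ, Fintype.card_fin]]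
    rw [PrealW]
    ring
  rw [h1]
  have hprod : (∏ j : Fin (n + 1), ((m : ℝ) + t + a j)) =
      ∏ j : Fin (n + 1), (a j + t + (m : ℝ)) :=
    Finset.prod_congr rfl fun j _ => by ring
  rw [hprod]
  have hTpow : (t + ((m : ℝ) + 1)) ^ (n + 1) ≠ 0 := pow_ne_zero _ hT
  field_simp
  ring


set_option maxHeartbeats 2000000 in
/-- `W_r` is the unique solution of `L(·) = z^{1/r}` which is analytic in `z^{1/r}`
near `0` and vanishes at `0`. -/
theorem stmt2 (n : ℕ) (a : Fin (n + 1) → ℝ) (ha : ∀ j, a j ∈ Set.Ioc (0 : ℝ) 1)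
    (r : ℕ) (hr : 2 ≤ r) (ρ : ℝ) (hρ : 0 < ρ) (hρ1 : ρ ≤ 1) (d : ℕ → ℂ)
    (hconv : ∀ w : ℂ, ‖w‖ < ρ → Summable fun k : ℕ => d k * w ^ k)
    (F : ℝ → ℂ)
    (hF : ∀ z : ℝ, F z = ∑' k : ℕ, d k * ((z ^ (1 / (r : ℝ)) : ℝ) : ℂ) ^ k)
    (hd0 : d 0 = 0)
    (hLF : ∀ z ∈ Set.Ioo (0 : ℝ) (ρ ^ r), hgLC n a F z = ((z ^ (1 / (r : ℝ)) : ℝ) : ℂ)) :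
    ∀ z ∈ Set.Ioo (0 : ℝ) (ρ ^ r), F z = ((Wr n a r z : ℝ) : ℂ) := by
  -- Basic numeric facts
  have hr1 : 1 ≤ r := le_trans (by norm_num) hr
  have hrpos : 0 < r := hr1
  have hr0 : (0:ℝ) < (r:ℝ) := by exact_mod_cast hrpos
  have hrC : (r:ℂ) ≠ 0 := by exact_mod_cast hr0.ne'
  have hd : GoodC ρ d := goodC_of_summable hρ hconv
  have hFE : Set.EqOn F (fun z => SsumC d (z ^ (1 / (r:ℝ)))) (Set.Ioo 0 (ρ ^ r)) := by
    intro z _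
    rw [hF z]; rfl
  -- coefficient sequences
  set P1 : ℕ → ℂ := fun k => ((k:ℂ)/(r:ℂ)) ^ (n+1) * d k with hP1def
  set P2 : ℕ → ℂ := fun k => (∏ j : Fin (n+1), ((k:ℂ)/(r:ℂ) + (a j : ℂ))) * d k with hP2def
  obtain ⟨hP1g, hP1e⟩ := DopC_iter hρ hr1 hd hFE (n+1)
  obtain ⟨hFoldg, hFolde⟩ := fold_ssum hρ hr1 (List.ofFn a) hd hFE
  have hlcoefP2 : lcoef r (List.ofFn a) d = P2 := by
    funext k
    rw [lcoef, List.map_ofFn, List.prod_ofFn]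
    rfl
  rw [hlcoefP2] at hFoldg hFolde
  have hlist : (List.ofFn fun j : Fin (n + 1) =>
      (fun g : ℝ → ℂ => fun w => DopC g w + (a j : ℂ) * g w)) =
      (List.ofFn a).map (fun b : ℝ => (fun g : ℝ → ℂ => fun w => DopC g w + ((b:ℝ):ℂ) * g w)) := by
    rw [List.map_ofFn]; rfl
  set δf : ℕ → ℂ := fun k => if k = 1 then (1:ℂ) else 0 with hδdef
  set P2r : ℕ → ℂ := fun k => if r ≤ k then P2 (k - r) else 0 with hP2rdef
  have hP2rg : GoodC ρ P2r := goodC_shiftr r hFoldg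
  set A : ℕ → ℂ := fun k => P1 k - P2r k - δf k with hAdef
  have hAg : GoodC ρ A := goodC_sub (goodC_sub hP1g hP2rg) goodC_delta
  -- the master equation on (0, ρ)
  have hAzero : ∀ x ∈ Set.Ioo (0:ℝ) ρ, SsumC A x = 0 := by
    intro w0 hw0
    have hz : w0 ^ r ∈ Set.Ioo (0:ℝ) (ρ ^ r) :=
      ⟨pow_pos hw0.1 r, pow_lt_pow_left₀ hw0.2 hw0.1.le (by omega)⟩
    have hwz : (w0 ^ r) ^ (1/(r:ℝ)) = w0 := pow_rpow_inv hr1 hw0.1.le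
    have hmain := hLF (w0 ^ r) hz
    rw [hgLC] at hmain
    rw [hlist] at hmain
    have h1 := hP1e hz
    have h2 := hFolde hz
    simp only at h1 h2
    rw [h1, h2, hwz] at hmain
    have hzc : ((w0 ^ r : ℝ) : ℂ) = ((w0:ℝ):ℂ)^r := by push_cast; ring
    rw [hzc, ssumC_pow_shift hFoldg r hw0.1.le hw0.2] at hmain
    have hAs : SsumC A w0 = SsumC P1 w0 - SsumC P2r w0 - SsumC δf w0 := by
      rw [show A = fun k => (fun j => P1 j - P2r j) k - δf k from rfl]
      rw [ssumC_sub (goodC_summable (goodC_sub hP1g hP2rg) hw0.1.le hw0.2)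
        (goodC_summable goodC_delta hw0.1.le hw0.2)]
      rw [ssumC_sub (goodC_summable hP1g hw0.1.le hw0.2)
        (goodC_summable hP2rg hw0.1.le hw0.2)]
    rw [hAs, hmain, ssumC_delta]
    ring
  have hAk := ssumC_zero_of_goodC hρ hAg hAzero
  have hrec : ∀ k : ℕ, ((k:ℂ)/(r:ℂ)) ^ (n+1) * d k =
      (if r ≤ k then (∏ j : Fin (n+1), (((k - r : ℕ):ℂ)/(r:ℂ) + (a j : ℂ))) * d (k - r) else 0)
      + (if k = 1 then (1:ℂ) else 0) := by
    intro k
    have h := hAk k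
    simp only [hAdef, hP2rdef, hδdef, hP1def, hP2def] at h
    have h2 : ((k:ℂ)/(r:ℂ)) ^ (n+1) * d k -
        ((if r ≤ k then (∏ j : Fin (n+1), (((k - r : ℕ):ℂ)/(r:ℂ) + (a j : ℂ))) * d (k - r) else 0)
        + (if k = 1 then (1:ℂ) else 0)) = 0 := by
      rw [sub_add_eq_sub_sub]
      exact h
    exact sub_eq_zero.mp h2
  -- solve the recursion
  set c : ℕ → ℂ := fun k => if k % r = 1 then ((PrealW n a r (k / r) : ℝ) : ℂ) else 0 with hcdef
  have hdc : ∀ k, d k = c k := by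
    intro k
    induction k using Nat.strong_induction_on with
    | _ k IH =>
    rcases Nat.lt_or_ge k r with hkr | hkr
    · -- k < r : no shift term
      have hnle : ¬ r ≤ k := Nat.not_le.mpr hkr
      have h := hrec k
      rw [if_neg hnle, zero_add] at h
      rcases Nat.eq_zero_or_pos k with rfl | hk0
      · rw [hd0, hcdef]
        simp [Nat.zero_mod, (by omega : (0:ℕ) ≠ 1)]
      rcases eq_or_ne k 1 with rfl | hk1
      · -- k = 1
        rw [if_pos rfl] at h
        have hkc : ((1:ℕ):ℂ)/(r:ℂ) ≠ 0 := by
          rw [Nat.cast_one]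
          exact div_ne_zero one_ne_zero hrC
        have hd1 : d 1 = (r:ℂ)^(n+1) := by
          have hp : (((1:ℕ):ℂ)/(r:ℂ)) ^ (n+1) ≠ 0 := pow_ne_zero _ hkc
          field_simp at h
          -- h should now give d 1 * something or directly
          have h' : d 1 = 1 / (((1:ℕ):ℂ)/(r:ℂ)) ^ (n+1) :=
            eq_div_of_mul_eq hp (by rw [mul_comm]; exact h)
          rw [h', Nat.cast_one, one_div_pow, one_div_one_div]
        have hc1 : c 1 = (r:ℂ)^(n+1) := by
          rw [hcdef]
          have hm : 1 % r = 1 := Nat.mod_eq_of_lt (by omega)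
          have hd' : 1 / r = 0 := Nat.div_eq_of_lt (by omega)
          simp only [hm, hd', if_pos]
          rw [PrealW]
          have : ∀ j : Fin (n+1), (ascPochhammer ℝ 0).eval (a j + 1/(r:ℝ)) /
              (ascPochhammer ℝ (0+1)).eval (1/(r:ℝ)) = (r:ℝ) := by
            intro j
            rw [ascPochhammer_zero, ascPochhammer_one]
            simp only [Polynomial.eval_one, Polynomial.eval_X]
            rw [one_div_one_div]
          rw [Finset.prod_congr rfl (fun j _ => this j), Finset.prod_const,
            Finset.card_univ, Fintype.card_fin]
          push_cast
          ring
        rw [hd1, hc1]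
      · -- 2 ≤ k < r
        rw [if_neg hk1] at h
        have hkc : ((k:ℕ):ℂ)/(r:ℂ) ≠ 0 :=
          div_ne_zero (by exact_mod_cast hk0.ne') hrC
        have hdk : d k = 0 := by
          have hp : (((k:ℕ):ℂ)/(r:ℂ)) ^ (n+1) ≠ 0 := pow_ne_zero _ hkc
          exact (mul_eq_zero.mp h).resolve_left hp
        rw [hdk, hcdef]
        have : k % r = k := Nat.mod_eq_of_lt hkr
        simp [this, hk1]
    · -- k ≥ r
      obtain ⟨k', rfl⟩ : ∃ k', k = k' + r := ⟨k - r, by omega⟩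
      have hk'lt : k' < k' + r := by omega
      have hIH := IH k' hk'lt
      have h := hrec (k' + r)
      rw [if_pos (Nat.le_add_left r k'), if_neg (by omega : ¬ k' + r = 1), add_zero,
        Nat.add_sub_cancel] at h
      have hmodeq : (k' + r) % r = k' % r := Nat.add_mod_right k' r
      have hlead : ((k' + r : ℕ):ℂ)/(r:ℂ) ≠ 0 :=
        div_ne_zero (by exact_mod_cast (by omega : k' + r ≠ 0)) hrC
      have hleadp : (((k' + r : ℕ):ℂ)/(r:ℂ)) ^ (n+1) ≠ 0 := pow_ne_zero _ hlead
      by_cases hm : k' % r = 1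
      · -- interesting case
        set m := k' / r with hmdef
        have hk'eq : k' = r * m + 1 := by
          have h0 := Nat.div_add_mod k' r
          rw [← hmdef] at h0
          omega
        have hck' : c k' = ((PrealW n a r m : ℝ) : ℂ) := by
          rw [hcdef]; simp only [hm, if_pos, hmdef]
        have hckr : c (k' + r) = ((PrealW n a r (m+1) : ℝ) : ℂ) := by
          rw [hcdef]
          have h1 : (k' + r) % r = 1 := by rw [hmodeq]; exact hm
          have h2 : (k' + r) / r = m + 1 := by
            rw [Nat.add_div_right _ hrpos, hmdef]
          simp only [h1, h2, if_pos]
        have hkC : ((k' + r : ℕ):ℂ)/(r:ℂ) = ((m:ℂ)+1) + 1/(r:ℂ) := by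
          have : (k' + r : ℕ) = r * (m + 1) + 1 := by
            rw [Nat.mul_succ]
            omega
          rw [this]
          push_cast
          field_simp
        have hk'C : ((k':ℕ):ℂ)/(r:ℂ) = (m:ℂ) + 1/(r:ℂ) := by
          rw [hk'eq]
          push_cast
          field_simp
        have hstep := prealW_step n a r hr1 m
        have hstepC : (((m:ℂ)+1) + 1/(r:ℂ))^(n+1) * ((PrealW n a r (m+1) : ℝ):ℂ) =
            (∏ j : Fin (n+1), ((m:ℂ) + 1/(r:ℂ) + (a j : ℂ))) * ((PrealW n a r m : ℝ):ℂ) := by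
          have hc := congrArg (fun x : ℝ => (x : ℂ)) hstep
          push_cast at hc
          exact hc
        rw [hIH, hck'] at h
        have hprodeq : (∏ j : Fin (n+1), (((k':ℕ):ℂ)/(r:ℂ) + (a j : ℂ))) =
            ∏ j : Fin (n+1), ((m:ℂ) + 1/(r:ℂ) + (a j : ℂ)) :=
          Finset.prod_congr rfl fun j _ => by rw [hk'C]
        rw [hprodeq, ← hstepC, ← hkC] at h
        rw [hckr]
        exact mul_left_cancel₀ hleadp h
      · -- boring case: everything vanishes
        have hck' : c k' = 0 := by rw [hcdef]; simp [hm]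
        rw [hIH, hck', mul_zero] at h
        have hdk : d (k' + r) = 0 := (mul_eq_zero.mp h).resolve_left hleadp
        rw [hdk, hcdef]
        simp [hmodeq, hm]
  -- final assembly
  intro z hz
  have hw := rpow_mem_Ioo hρ hr1 hz
  have hcg : GoodC ρ c := by
    rw [← funext hdc]
    exact hd
  have hFz : F z = SsumC c (z ^ (1/(r:ℝ))) := by
    rw [hF z, show d = c from funext hdc]
    rfl
  have hinj : Function.Injective (fun m : ℕ => m * r + 1) := by
    intro x y hxy
    simp only at hxy
    have : x * r = y * r := by omega
    exact Nat.eq_of_mul_eq_mul_right hrpos this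
  have hvan : ∀ k ∉ Set.range (fun m : ℕ => m * r + 1), c k = 0 := by
    intro k hk
    rw [hcdef]
    by_cases hm : k % r = 1
    · exfalso
      apply hk
      refine ⟨k / r, ?_⟩
      have := Nat.div_add_mod' k r
      simp only
      omega
    · simp [hm]
  have hsummable := goodC_summable hcg hw.1.le hw.2
  have hhs : HasSum (fun k => c k * ((z ^ (1/(r:ℝ)) : ℝ):ℂ)^k)
      (SsumC c (z ^ (1/(r:ℝ)))) := hsummable.hasSum
  have hhs2 : HasSum (fun m : ℕ => c (m*r+1) * ((z ^ (1/(r:ℝ)) : ℝ):ℂ)^(m*r+1))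
      (SsumC c (z ^ (1/(r:ℝ)))) :=
    (hinj.hasSum_iff (fun k hk => by rw [hvan k hk, zero_mul])).mpr hhs
  have hterm : (fun m : ℕ => c (m*r+1) * ((z ^ (1/(r:ℝ)) : ℝ):ℂ)^(m*r+1)) =
      fun m : ℕ => ((PrealW n a r m * z ^ ((m:ℝ) + 1/(r:ℝ)) : ℝ) : ℂ) := by
    funext m
    have h1 : (m*r+1) % r = 1 := by
      rw [Nat.mul_add_mod']
      exact Nat.mod_eq_of_lt (by omega)
    have h2 : (m*r+1) / r = m := by
      rw [mul_comm, Nat.mul_add_div hrpos, Nat.div_eq_of_lt (by omega), add_zero]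
    have h3 : (z ^ (1/(r:ℝ)) : ℝ)^(m*r+1) = z ^ ((m:ℝ) + 1/(r:ℝ)) := by
      rw [← Real.rpow_natCast (z ^ (1/(r:ℝ))) (m*r+1), ← Real.rpow_mul hz.1.le]
      congr 1
      push_cast
      field_simp
    have hc : c (m*r+1) = ((PrealW n a r m : ℝ):ℂ) := by
      rw [hcdef]; simp only [h1, h2, if_pos]
    rw [hc, ← h3]
    push_cast
    ring
  rw [hterm] at hhs2
  have hsumR : Summable (fun m : ℕ => PrealW n a r m * z ^ ((m:ℝ) + 1/(r:ℝ))) :=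
    Complex.summable_ofReal.mp hhs2.summable
  rw [hFz, ← hhs2.tsum_eq, ← Complex.ofReal_tsum]
  rfl
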